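/- Define T(γ) = r − 2·r·x*(γ)/(K₀+F) − α·y*(γ)/(1+h·x*(γ))², the trace of the Jacobian at the coexistence equilibrium as a function of the insecticide mortality γ. As γ increases toward the value γ_c where x*(γ) = K₀+F (i.e., y*(γ) → 0), T(γ) tends to −r; in particular, there exists γ₀ such that T(γ) < 0 for all γ in (γ₀, γ_c), so sufficiently strong insecticide mortality stabilizes the coexistence equilibrium whenever it exists. -/

import Mathlib

noncomputable def xstarγ (β δ h γ : ℝ) : ℝ := (γ + δ) / (β - h * (γ + δ))

noncomputable def ystarγ (r K0 F α β δ h γ : ℝ) : ℝ :=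
  β * r * (-(γ + δ) + (K0 + F) * (β - h * (γ + δ))) /
    (α * (K0 + F) * (β - h * (γ + δ)) ^ 2)

noncomputable def traceT (r K0 F α β δ h γ : ℝ) : ℝ :=
  r - 2 * r * xstarγ β δ h γ / (K0 + F) -
    α * ystarγ r K0 F α β δ h γ / (1 + h * xstarγ β δ h γ) ^ 2

theorem strong_insecticide_stabilizes
    (r K0 F α β δ h : ℝ)
    (hr : 0 < r) (hK0 : 0 < K0) (hF : 0 < F) (hα : 0 < α)
    (hβ : 0 < β) (hδ : 0 < δ) (hh : 0 < h)
    (hcap : β * (K0 + F) > (1 + h * (K0 + F)) * δ) :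
    let γc : ℝ := β * (K0 + F) / (1 + h * (K0 + F)) - δ
    Filter.Tendsto (traceT r K0 F α β δ h)
      (nhdsWithin γc (Set.Iio γc)) (nhds (-r)) ∧
    ∃ γ₀ : ℝ, γ₀ < γc ∧ ∀ γ ∈ Set.Ioo γ₀ γc, traceT r K0 F α β δ h γ < 0 := by
  intro γc
  set s : ℝ := K0 + F with hs
  have hspos : 0 < s := by positivity
  have hcpos : 0 < 1 + h * s := by positivity
  have hγcδ : γc + δ = β * s / (1 + h * s) := by simp [γc, hs]
  have hden : β - h * (γc + δ) = β / (1 + h * s) := by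
    rw [hγcδ]; field_simp; ring
  have hdenpos : 0 < β - h * (γc + δ) := by rw [hden]; positivity
  have hx : xstarγ β δ h γc = s := by
    unfold xstarγ
    rw [hγcδ, show β - h * (β * s / (1 + h * s)) = β / (1 + h * s) from by
      field_simp; ring]
    rw [div_div_div_eq]
    field_simp
  have hy : ystarγ r K0 F α β δ h γc = 0 := by
    unfold ystarγ
    rw [hγcδ, show β - h * (β * s / (1 + h * s)) = β / (1 + h * s) from by
      field_simp; ring, ← hs]
    have : -(β * s / (1 + h * s)) + s * (β / (1 + h * s)) = 0 := by ring
    rw [this]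
    simp
  have hval : traceT r K0 F α β δ h γc = -r := by
    unfold traceT
    rw [hx, hy, ← hs]
    field_simp
    ring
  have hcont : ContinuousAt (traceT r K0 F α β δ h) γc := by
    unfold traceT xstarγ ystarγ
    have hd1 : β - h * (γc + δ) ≠ 0 := hdenpos.ne'
    have hxc : ContinuousAt (fun γ : ℝ => (γ + δ) / (β - h * (γ + δ))) γc :=
      ContinuousAt.div (by fun_prop) (by fun_prop) hd1
    have h1x : (1 : ℝ) + h * ((γc + δ) / (β - h * (γc + δ))) ≠ 0 := by
      have : (γc + δ) / (β - h * (γc + δ)) = xstarγ β δ h γc := rfl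
      rw [this, hx]; exact hcpos.ne'
    refine ContinuousAt.sub (ContinuousAt.sub continuousAt_const ?_) ?_
    · exact ContinuousAt.div (by fun_prop) continuousAt_const (by positivity)
    · refine ContinuousAt.div ?_ ?_ (by positivity)
      · refine ContinuousAt.mul continuousAt_const ?_
        refine ContinuousAt.div (by fun_prop) (by fun_prop) ?_
        positivity
      · exact ContinuousAt.pow (ContinuousAt.add continuousAt_const
          (ContinuousAt.mul continuousAt_const hxc)) 2
  have htend : Filter.Tendsto (traceT r K0 F α β δ h)
      (nhdsWithin γc (Set.Iio γc)) (nhds (-r)) := by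
    rw [← hval]
    exact hcont.continuousWithinAt.tendsto
  refine ⟨htend, ?_⟩
  have hev : ∀ᶠ γ in nhdsWithin γc (Set.Iio γc), traceT r K0 F α β δ h γ < 0 :=
    htend.eventually_lt_const (by linarith)
  rw [Filter.eventually_iff, mem_nhdsLT_iff_exists_Ioo_subset] at hev
  obtain ⟨l, hl, hsub⟩ := hev
  exact ⟨l, hl, fun γ hγ => hsub hγ⟩
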